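/- Let d ≥ 1 and let Σ_μ, Σ_R, Σ̄_J ∈ ℝ^{d×d} be symmetric positive definite and κ ∈ ℝ^{d×d} be positive definite. Define, for λ > 0 and symmetric positive semidefinite q ∈ ℝ^{d×d}, α^{J,λ}(q) = Σ_μ − κq − qκᵀ − q (Σ_R^{-1} + λ·Σ̄_J^{-1}) q. Then for every r > 0, setting a_α = tr(Σ_μ) + (d·tr(Σ̄_J)·r)^{-1} and b_α = 2·(d·tr(Σ̄_J)·√r)^{-1}, one has tr(α^{J,λ}(q)) ≤ a_α − √λ · b_α · tr(q) for every symmetric positive semidefinite q ∈ ℝ^{d×d} and every λ > 0. -/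

import Mathlib

open Matrix Real

variable {n : Type*} [Fintype n] [DecidableEq n]

open scoped MatrixOrder

lemma psd_diag_nonneg {A : Matrix n n ℝ} (hA : A.PosSemidef) (i : n) : 0 ≤ A i i := by
  simpa using hA.dotProduct_mulVec_nonneg (Pi.single i 1)

lemma psd_trace_nonneg {A : Matrix n n ℝ} (hA : A.PosSemidef) : 0 ≤ A.trace :=
  Finset.sum_nonneg fun i _ => psd_diag_nonneg hA i

lemma sandwich_trace_nonneg {q M : Matrix n n ℝ} (hq : q.PosSemidef) (hM : M.PosSemidef) :
    0 ≤ (q * M * q).trace := by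
  have := hM.conjTranspose_mul_mul_same q
  rw [hq.1.eq] at this  -- qᴴ = q
  exact psd_trace_nonneg this

lemma trace_kappa_mul_nonneg {κ q : Matrix n n ℝ} (hq : q.PosSemidef)
    (hκ : ∀ x : n → ℝ, x ≠ 0 → 0 < x ⬝ᵥ (κ *ᵥ x)) : 0 ≤ (κ * q).trace := by
  have hκ' : ∀ x : n → ℝ, 0 ≤ x ⬝ᵥ (κ *ᵥ x) := by
    intro x
    by_cases hx : x = 0
    · simp [hx]
    · exact (hκ x hx).le
  set s := CFC.sqrt q with hs
  have hss : s * s = q := CFC.sqrt_mul_sqrt_self q hq.nonneg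
  have hsym : sᵀ = s := (CFC.sqrt_nonneg q).posSemidef.1.eq
  have h1 : (κ * q).trace = (s * κ * s).trace := by
    rw [← hss, ← mul_assoc, trace_mul_cycle]
  rw [h1]
  apply Finset.sum_nonneg
  intro i _
  have : (s * κ * s) i i = (fun j => s i j) ⬝ᵥ (κ *ᵥ (fun j => s i j)) := by
    simp only [mul_apply, dotProduct, mulVec, dotProduct, Finset.sum_mul]
    rw [Finset.sum_comm]
    apply Finset.sum_congr rfl
    intro j _
    rw [Finset.mul_sum]
    apply Finset.sum_congr rfl
    intro k _
    have hki : s k i = s i k := by conv_lhs => rw [← hsym, transpose_apply]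
    rw [hki]; ring
  rw [Matrix.diag_apply] at *
  rw [this]
  exact hκ' _

lemma quad_le_trace_mul {A : Matrix n n ℝ} (hA : A.PosSemidef) (x : n → ℝ) :
    x ⬝ᵥ (A *ᵥ x) ≤ A.trace * (x ⬝ᵥ x) := by
  set s := CFC.sqrt A with hs
  have hss : s * s = A := CFC.sqrt_mul_sqrt_self A hA.nonneg
  have hsym : sᵀ = s := (CFC.sqrt_nonneg A).posSemidef.1.eq
  have h1 : x ⬝ᵥ (A *ᵥ x) = (s *ᵥ x) ⬝ᵥ (s *ᵥ x) := by
    rw [← hss, ← mulVec_mulVec, dotProduct_mulVec, ← mulVec_transpose, hsym]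
  have h2 : A.trace = ∑ i, ∑ j, (s i j)^2 := by
    rw [← hss]
    simp only [trace, diag_apply, mul_apply]
    apply Finset.sum_congr rfl; intro i _
    apply Finset.sum_congr rfl; intro j _
    have : s j i = s i j := by conv_lhs => rw [← hsym, transpose_apply]
    rw [this]; ring
  rw [h1, h2, Finset.sum_mul]
  simp only [dotProduct, mulVec, dotProduct]
  apply Finset.sum_le_sum
  intro i _
  have := Finset.sum_mul_sq_le_sq_mul_sq Finset.univ (fun j => s i j) x
  calc (∑ j, s i j * x j) * (∑ j, s i j * x j)
      = (∑ j, s i j * x j)^2 := by ring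
    _ ≤ (∑ j, (s i j)^2) * (∑ j, (x j)^2) := this
    _ = (∑ j, (s i j)^2) * (∑ j, x j * x j) := by
        congr 1; apply Finset.sum_congr rfl; intro j _; ring

lemma posdef_trace_pos {A : Matrix n n ℝ} [Nonempty n] (hA : A.PosDef) : 0 < A.trace := by
  apply Finset.sum_pos
  · intro i _
    have := hA.dotProduct_mulVec_pos (x := Pi.single i 1) (by simp [Pi.single_eq_same, Function.ne_iff])
    simpa using this
  · exact Finset.univ_nonempty

lemma inv_quad_ge {A : Matrix n n ℝ} [Nonempty n] (hA : A.PosDef) (x : n → ℝ) :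
    (A.trace)⁻¹ * (x ⬝ᵥ x) ≤ x ⬝ᵥ (A⁻¹ *ᵥ x) := by
  have hdpn : ∀ y : n → ℝ, 0 ≤ y ⬝ᵥ y := fun y =>
    Finset.sum_nonneg fun i _ => mul_self_nonneg _
  by_cases hx : x = 0
  · simp [hx]
  set s := CFC.sqrt A with hs
  have hss : s * s = A := CFC.sqrt_mul_sqrt_self A hA.posSemidef.nonneg
  have hsym : sᵀ = s := (CFC.sqrt_nonneg A).posSemidef.1.eq
  have hdets : IsUnit s.det := by
    have h2 : s.det * s.det = A.det := by rw [← det_mul, hss]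
    refine isUnit_iff_ne_zero.mpr (fun h => ?_)
    rw [h, mul_zero] at h2
    exact hA.det_pos.ne' h2.symm
  have hinv : A⁻¹ = s⁻¹ * s⁻¹ := by rw [← hss, Matrix.mul_inv_rev]
  have hstinv : (s⁻¹)ᵀ = s⁻¹ := by rw [transpose_nonsing_inv, hsym]
  have huv : (s *ᵥ x) ⬝ᵥ (s⁻¹ *ᵥ x) = x ⬝ᵥ x := by
    rw [dotProduct_mulVec, ← mulVec_transpose, hstinv, mulVec_mulVec,
      Matrix.nonsing_inv_mul _ hdets, one_mulVec, dotProduct_comm]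
  have hvv : (s⁻¹ *ᵥ x) ⬝ᵥ (s⁻¹ *ᵥ x) = x ⬝ᵥ (A⁻¹ *ᵥ x) := by
    rw [dotProduct_mulVec, ← mulVec_transpose, hstinv, mulVec_mulVec, ← hinv, dotProduct_comm]
  have huu : (s *ᵥ x) ⬝ᵥ (s *ᵥ x) ≤ A.trace * (x ⬝ᵥ x) := by
    have h3 : (s *ᵥ x) ⬝ᵥ (s *ᵥ x) = x ⬝ᵥ (A *ᵥ x) := by
      rw [dotProduct_mulVec, ← mulVec_transpose, hsym, mulVec_mulVec, hss, dotProduct_comm]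
    rw [h3]
    exact quad_le_trace_mul hA.posSemidef x
  have hcs : ((s *ᵥ x) ⬝ᵥ (s⁻¹ *ᵥ x))^2 ≤ ((s *ᵥ x) ⬝ᵥ (s *ᵥ x)) * ((s⁻¹ *ᵥ x) ⬝ᵥ (s⁻¹ *ᵥ x)) := by
    have := Finset.sum_mul_sq_le_sq_mul_sq Finset.univ (fun i => (s *ᵥ x) i) (fun i => (s⁻¹ *ᵥ x) i)
    simpa [dotProduct, pow_two] using this
  have hxx : 0 < x ⬝ᵥ x := by
    rcases (hdpn x).lt_or_eq with h | h
    · exact h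
    · exact absurd (dotProduct_self_eq_zero.mp h.symm) hx
  have htr : 0 < A.trace := posdef_trace_pos hA
  have hvv' : 0 ≤ (s⁻¹ *ᵥ x) ⬝ᵥ (s⁻¹ *ᵥ x) := hdpn _
  rw [huv] at hcs
  rw [← hvv]
  nlinarith [mul_pos htr hxx, mul_le_mul_of_nonneg_right huu hvv', mul_inv_cancel₀ htr.ne']

lemma trace_q_inv_q {A q : Matrix n n ℝ} [Nonempty n] (hA : A.PosDef) (hq : q.PosSemidef) :
    (A.trace)⁻¹ * (q * q).trace ≤ (q * A⁻¹ * q).trace := by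
  set c := (A.trace)⁻¹ with hc
  have hM : (A⁻¹ - c • (1 : Matrix n n ℝ)).PosSemidef := by
    refine PosSemidef.of_dotProduct_mulVec_nonneg ?_ ?_
    · have h1 : ((c • (1 : Matrix n n ℝ))ᴴ = c • 1) := by
        simp [conjTranspose_smul]
      exact hA.inv.1.sub h1
    · intro x
      simp only [star_trivial, sub_mulVec, smul_mulVec, one_mulVec,
        dotProduct_sub, dotProduct_smul, smul_eq_mul, sub_nonneg]
      exact inv_quad_ge hA x
  have h0 : 0 ≤ (q * (A⁻¹ - c • 1) * q).trace := sandwich_trace_nonneg hq hM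
  have hexp : q * (A⁻¹ - c • 1) * q = q * A⁻¹ * q - c • (q * q) := by
    rw [Matrix.mul_sub, Matrix.sub_mul]
    congr 1
    rw [Matrix.mul_smul, mul_one, Matrix.smul_mul]
  rw [hexp, trace_sub, trace_smul, smul_eq_mul, sub_nonneg] at h0
  exact h0

lemma trace_sq_le_card_mul {q : Matrix n n ℝ} (hq : q.PosSemidef) :
    (q.trace)^2 ≤ (Fintype.card n : ℝ) * (q * q).trace := by
  have hsym : qᵀ = q := hq.1.eq
  have h1 : (q.trace)^2 ≤ (Fintype.card n : ℝ) * ∑ i, (q i i)^2 := by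
    have := sq_sum_le_card_mul_sum_sq (s := (Finset.univ : Finset n))
      (f := fun i => q i i)
    simpa [trace, diag_apply, Finset.card_univ] using this
  refine h1.trans ?_
  apply mul_le_mul_of_nonneg_left _ (Nat.cast_nonneg _)
  simp only [trace, diag_apply, mul_apply]
  apply Finset.sum_le_sum
  intro i _
  have hnn : ∀ j ∈ Finset.univ, 0 ≤ q i j * q j i := by
    intro j _
    have : q j i = q i j := by conv_lhs => rw [← hsym, transpose_apply]
    rw [this]; exact mul_self_nonneg _
  have := Finset.single_le_sum hnn (Finset.mem_univ i)
  calc (q i i)^2 = q i i * q i i := by ring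
    _ ≤ ∑ j, q i j * q j i := this

/-- estimate for the trace of the Riccati drift term `α^{J,λ}`
for continuous-time expert opinions. -/
theorem trace_alpha_J_bound
    (d : ℕ) (hd : 1 ≤ d)
    (Sμ SR SJ κ : Matrix (Fin d) (Fin d) ℝ)
    (hSμ : Sμ.PosDef) (hSR : SR.PosDef) (hSJ : SJ.PosDef)
    (hκ : ∀ x : Fin d → ℝ, x ≠ 0 → 0 < x ⬝ᵥ (κ *ᵥ x))
    (r : ℝ) (hr : 0 < r) :
    ∀ (q : Matrix (Fin d) (Fin d) ℝ), q.PosSemidef →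
      ∀ lam : ℝ, 0 < lam →
        (Sμ - κ * q - q * κᵀ - q * (SR⁻¹ + lam • SJ⁻¹) * q).trace ≤
          (Sμ.trace + ((d : ℝ) * SJ.trace * r)⁻¹) -
            Real.sqrt lam * (2 * ((d : ℝ) * SJ.trace * Real.sqrt r)⁻¹) * q.trace := by
  intro q hq lam hlam
  haveI : Nonempty (Fin d) := ⟨⟨0, hd⟩⟩
  set T := q.trace with hT
  set S := SJ.trace with hS
  have hS0 : 0 < S := posdef_trace_pos hSJ
  have hdd : (1:ℝ) ≤ (d:ℝ) := by exact_mod_cast hd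
  have hdd0 : (0:ℝ) < (d:ℝ) := lt_of_lt_of_le one_pos hdd
  set P := ((d:ℝ) * S)⁻¹ with hP
  have hP0 : 0 < P := inv_pos.mpr (mul_pos hdd0 hS0)
  set sl := Real.sqrt lam with hsl
  set sr := Real.sqrt r with hsr
  have hsl2 : sl^2 = lam := Real.sq_sqrt hlam.le
  have hsr0 : 0 < sr := Real.sqrt_pos.mpr hr
  have hsr2 : sr^2 = r := Real.sq_sqrt hr.le
  set srI := sr⁻¹ with hsrI
  -- trace expansion
  have hexpand : (Sμ - κ * q - q * κᵀ - q * (SR⁻¹ + lam • SJ⁻¹) * q).trace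
      = Sμ.trace - (κ * q).trace - (q * κᵀ).trace
        - ((q * SR⁻¹ * q).trace + lam * (q * SJ⁻¹ * q).trace) := by
    rw [trace_sub, trace_sub, trace_sub]
    congr 1
    have h2 : q * (SR⁻¹ + lam • SJ⁻¹) * q = q * SR⁻¹ * q + lam • (q * SJ⁻¹ * q) := by
      rw [Matrix.mul_add, Matrix.add_mul]
      congr 1
      rw [Matrix.mul_smul, Matrix.smul_mul]
    rw [h2, trace_add, trace_smul, smul_eq_mul]
  -- nonnegativity of the drift terms
  have ht1 : 0 ≤ (κ * q).trace := trace_kappa_mul_nonneg hq hκ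
  have hκt : ∀ x : Fin d → ℝ, x ≠ 0 → 0 < x ⬝ᵥ (κᵀ *ᵥ x) := by
    intro x hx
    have : x ⬝ᵥ (κᵀ *ᵥ x) = x ⬝ᵥ (κ *ᵥ x) := by
      rw [dotProduct_mulVec, vecMul_transpose, dotProduct_comm]
    rw [this]; exact hκ x hx
  have ht2 : 0 ≤ (q * κᵀ).trace := by
    rw [trace_mul_comm]
    exact trace_kappa_mul_nonneg hq hκt
  have ht3 : 0 ≤ (q * SR⁻¹ * q).trace := sandwich_trace_nonneg hq hSR.inv.posSemidef
  -- lower bound on the SJ term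
  have hT0 : 0 ≤ T := psd_trace_nonneg hq
  have hqq : T^2 ≤ (d:ℝ) * (q * q).trace := by
    have := trace_sq_le_card_mul hq
    simpa using this
  have ht4 : S⁻¹ * (q * q).trace ≤ (q * SJ⁻¹ * q).trace := trace_q_inv_q hSJ hq
  have hkey : P * T^2 ≤ (q * SJ⁻¹ * q).trace := by
    refine le_trans ?_ ht4
    rw [hP, mul_inv]
    have : (d:ℝ)⁻¹ * T^2 ≤ (q * q).trace := by
      rw [inv_mul_le_iff₀ hdd0]; exact hqq
    calc (d:ℝ)⁻¹ * S⁻¹ * T^2 = S⁻¹ * ((d:ℝ)⁻¹ * T^2) := by ring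
      _ ≤ S⁻¹ * (q * q).trace := by
          exact mul_le_mul_of_nonneg_left this (inv_nonneg.mpr hS0.le)
  have hstep3 : sl^2 * P * T^2 ≤ lam * (q * SJ⁻¹ * q).trace := by
    rw [hsl2]
    have := mul_le_mul_of_nonneg_left hkey hlam.le
    linarith [this]
  -- scalar AM-GM step
  have hstep4 : 2 * sl * T * srI * P ≤ P * srI^2 + sl^2 * P * T^2 := by
    nlinarith [mul_nonneg hP0.le (sq_nonneg (sl * T - srI))]
  -- rewrite RHS constants
  have heq1 : ((d:ℝ) * S * r)⁻¹ = P * srI^2 := by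
    rw [← hsr2, mul_inv, hP, hsrI, ← inv_pow]
  have heq2 : ((d:ℝ) * S * sr)⁻¹ = P * srI := by
    rw [mul_inv, hP, hsrI]
  rw [hexpand, heq1, heq2]
  have hgoal : sl * (2 * (P * srI)) * T = 2 * sl * T * srI * P := by ring
  rw [hgoal]
  linarith [hstep3, hstep4, ht1, ht2, ht3]
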